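/- Let f be a three-times differentiable real-valued function on an open interval I that satisfies equation (19), and suppose f is nowhere zero on I. Define Q := 2 f f'' + (f' − 1)(f' − 3). Then either Q is identically zero on I, or Q(r) ≠ 0 for every r in I. -/

import Mathlib

/-- For a three-times differentiable solution `f` of equation (19) on an open
interval `I` with `f` nowhere zero, the quantity
`Q := 2 f f'' + (f' - 1)(f' - 3)` is either identically zero on `I`, or
nowhere zero on `I`. -/
theorem eq19_Q_dichotomy
    (I : Set ℝ) (hI : IsOpen I) (hI' : I.OrdConnected)
    (f f1 f2 f3 : ℝ → ℝ)
    (hf : ∀ r ∈ I, HasDerivAt f (f1 r) r)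
    (hf1 : ∀ r ∈ I, HasDerivAt f1 (f2 r) r)
    (hf2 : ∀ r ∈ I, HasDerivAt f2 (f3 r) r)
    (heq : ∀ r ∈ I,
      2 * (f r) ^ 2 * f3 r + 2 * f r * (f1 r - 3) * f2 r
        - (f1 r + 1) * (f1 r - 1) * (f1 r - 3) = 0)
    (hfne : ∀ r ∈ I, f r ≠ 0)
    (Q : ℝ → ℝ)
    (hQ : Q = fun r => 2 * f r * f2 r + (f1 r - 1) * (f1 r - 3)) :
    (∀ r ∈ I, Q r = 0) ∨ (∀ r ∈ I, Q r ≠ 0) := by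
  rcases Set.eq_empty_or_nonempty I with hIe | ⟨a, ha⟩
  · left; intro r hr; simp [hIe] at hr
  set g : ℝ → ℝ := fun r => (f1 r + 1) / f r with hg
  -- g is continuous on I
  have hgc : ContinuousOn g I := by
    apply ContinuousOn.div
    · exact fun r hr => ((hf1 r hr).continuousAt.continuousWithinAt.add continuousWithinAt_const)
    · exact fun r hr => (hf r hr).continuousAt.continuousWithinAt
    · exact hfne
  -- Q satisfies Q' = g * Q on I
  have hQ' : ∀ r ∈ I, HasDerivAt Q (g r * Q r) r := by
    intro r hr
    have h1 : HasDerivAt Q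
        (2 * f1 r * f2 r + 2 * f r * f3 r + f2 r * (f1 r - 3) + (f1 r - 1) * f2 r) r := by
      rw [hQ]
      have := (((hasDerivAt_const r 2).mul (hf r hr)).mul (hf2 r hr)).add
        (((hf1 r hr).sub_const 1).mul ((hf1 r hr).sub_const 3))
      refine this.congr_deriv ?_
      simp only [Pi.mul_apply]; ring
    convert h1 using 1
    have hfr := hfne r hr
    have he := heq r hr
    rw [hg, hQ]; dsimp only; field_simp
    nlinarith [he, sq_nonneg (f r)]
  -- antiderivative of g
  set G : ℝ → ℝ := fun r => ∫ t in a..r, g t with hGdef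
  have hG : ∀ r ∈ I, HasDerivAt G (g r) r := by
    intro r hr
    have hsub : Set.uIcc a r ⊆ I := hI'.uIcc_subset ha hr
    have hint : IntervalIntegrable g MeasureTheory.volume a r :=
      (hgc.mono hsub).intervalIntegrable
    exact intervalIntegral.integral_hasDerivAt_right hint
      (hgc.stronglyMeasurableAtFilter hI r hr)
      ((hgc r hr).continuousAt (hI.mem_nhds hr))
  -- F = Q * exp(-G) has zero derivative on I
  set F : ℝ → ℝ := fun r => Q r * Real.exp (-G r) with hFdef
  have hF : ∀ r ∈ I, HasDerivAt F 0 r := by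
    intro r hr
    have h := (hQ' r hr).mul (((hG r hr).neg).exp)
    refine h.congr_deriv ?_
    simp only [Pi.neg_apply]; ring
  -- F is constant on I
  have hconst : ∀ r ∈ I, F r = F a := by
    intro r hr
    have hconv : Convex ℝ I := hI'.convex
    have := hconv.norm_image_sub_le_of_norm_hasDerivWithin_le
      (f' := fun _ => (0 : ℝ)) (C := 0)
      (fun x hx => (hF x hx).hasDerivWithinAt) (fun x _ => by simp) ha hr
    have : ‖F r - F a‖ ≤ 0 := by simpa using this
    have := norm_nonneg (F r - F a)
    have h0 : F r - F a = 0 := by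
      have : ‖F r - F a‖ = 0 := le_antisymm ‹‖F r - F a‖ ≤ 0› (norm_nonneg _)
      simpa [norm_eq_zero] using this
    linarith [sub_eq_zero.mp h0, (rfl : F r = F r)]
  -- so Q r = F a * exp (G r)
  have hQform : ∀ r ∈ I, Q r = F a * Real.exp (G r) := by
    intro r hr
    have := hconst r hr
    have hexp : Real.exp (-G r) ≠ 0 := Real.exp_ne_zero _
    simp only [hFdef] at this ⊢
    rw [← this, mul_assoc, ← Real.exp_add]
    simp
  by_cases hFa : F a = 0
  · left; intro r hr; rw [hQform r hr, hFa, zero_mul]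
  · right; intro r hr; rw [hQform r hr]
    exact mul_ne_zero hFa (Real.exp_ne_zero _)
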